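/- If a virtual graph G has a bridge edge, then its S-polynomial is identically zero. -/

import Mathlib

open Polynomial

noncomputable section
open scoped Classical

/-- A ribbon graph (combinatorial map), given by a finite set of half-edges
together with a fixed-point-free involution `edgePair` (pairing the two half-edges
of each edge) and a rotation permutation `rot` whose cycles are the vertices with
their counterclockwise rotation system. -/
structure RibbonGraph where
  H : Type
  fintypeH : Fintype H
  decH : DecidableEq H
  edgePair : Equiv.Perm H
  rot : Equiv.Perm H
  edgePair_invol : ∀ h, edgePair (edgePair h) = h
  edgePair_nofix : ∀ h, edgePair h ≠ h

namespace RibbonGraph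

variable (G : RibbonGraph)

instance : Fintype G.H := G.fintypeH
instance : DecidableEq G.H := G.decH

/-- Edges are the orbits of the involution `edgePair`. -/
def edgeSetoid : Setoid G.H :=
  ⟨G.edgePair.SameCycle, ⟨fun _ => Equiv.Perm.SameCycle.refl _ _,
    fun h => h.symm, fun h h' => h.trans h'⟩⟩

def EdgeSet := Quotient G.edgeSetoid

instance : Finite G.EdgeSet := Quotient.finite _
instance : Fintype G.EdgeSet := Fintype.ofFinite _

def edgeOf (h : G.H) : G.EdgeSet := Quotient.mk G.edgeSetoid h

/-- Vertices are the orbits of the rotation `rot`. -/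
def vertexSetoid : Setoid G.H :=
  ⟨G.rot.SameCycle, ⟨fun _ => Equiv.Perm.SameCycle.refl _ _,
    fun h => h.symm, fun h h' => h.trans h'⟩⟩

def VertexSet := Quotient G.vertexSetoid

instance : Finite G.VertexSet := Quotient.finite _
instance : Fintype G.VertexSet := Fintype.ofFinite _

def vertexOf (h : G.H) : G.VertexSet := Quotient.mk G.vertexSetoid h

def numVertices : ℕ := Nat.card G.VertexSet
def numEdges : ℕ := Nat.card G.EdgeSet

/-- One step of the connectivity relation of `G − D` (`D` a set of deleted edges):
half-edges at a common vertex are connected, as are the two halves of a kept edge.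
Vertices all of whose half-edges are deleted remain as isolated components. -/
def connStep (D : Finset G.EdgeSet) (x y : G.H) : Prop :=
  G.rot.SameCycle x y ∨ (G.edgeOf x ∉ D ∧ y = G.edgePair x)

/-- `b₀(G − D)`: number of connected components of the deletion `G − D`. -/
def b0Del (D : Finset G.EdgeSet) : ℕ :=
  Nat.card (Quotient (Setoid.mk _ (Relation.EqvGen.is_equivalence (G.connStep D))))

def numEdgesDel (D : Finset G.EdgeSet) : ℕ := G.numEdges - D.card

/-- `b₁(G − D)`: the cycle rank `|E| − |V| + b₀` of the deletion. -/
def b1Del (D : Finset G.EdgeSet) : ℤ :=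
  (G.numEdgesDel D : ℤ) - (G.numVertices : ℤ) + (G.b0Del D : ℤ)

/-- One step of the face (boundary-walk) relation of `G − D`: from a kept half-edge `x`,
go to its partner and then rotate, skipping deleted half-edges. Its equivalence classes
through kept half-edges are the boundary components of `G − D`. -/
def faceStep (D : Finset G.EdgeSet) (x y : G.H) : Prop :=
  G.edgeOf x ∉ D ∧ G.edgeOf y ∉ D ∧
    ∃ m : ℕ, 0 < m ∧ y = (G.rot ^ m) (G.edgePair x) ∧
      ∀ j, 0 < j → j < m → G.edgeOf ((G.rot ^ j) (G.edgePair x)) ∈ D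

def faceSetoid (D : Finset G.EdgeSet) : Setoid G.H :=
  Setoid.mk _ (Relation.EqvGen.is_equivalence (G.faceStep D))

/-- The number of boundary components (faces) of the ribbon graph `G − D`:
face-classes of kept half-edges, plus one circle for each fully deleted vertex. -/
def facesDel (D : Finset G.EdgeSet) : ℕ :=
  Nat.card {c : Quotient (G.faceSetoid D) // ∃ h, G.edgeOf h ∉ D ∧ Quotient.mk (G.faceSetoid D) h = c}
    + Nat.card {v : G.VertexSet // ∀ h, G.vertexOf h = v → G.edgeOf h ∈ D}

/-- The genus of `G − D`, via the Euler characteristic relation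
`|V| − |E| + f = 2b₀ − 2g`, i.e. `2g = b₁ − f + b₀`. -/
def genusDel (D : Finset G.EdgeSet) : ℤ :=
  (G.b1Del D - (G.facesDel D : ℤ) + (G.b0Del D : ℤ)) / 2

/-- The `S`-polynomial state sum `S_G(Q) = Σ_{T⊆E} (−1)^{|T|} Q^{b₁(G−T) − g(G−T)}`. -/
def SPoly : Polynomial ℚ :=
  ∑ D : Finset G.EdgeSet, (-1 : Polynomial ℚ) ^ D.card * X ^ (G.b1Del D - G.genusDel D).toNat

/-- The flow polynomial state sum `F_G(Q) = Σ_{T⊆E} (−1)^{|T|} Q^{b₁(G−T)}`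
of the underlying graph. -/
def FPoly : Polynomial ℚ :=
  ∑ D : Finset G.EdgeSet, (-1 : Polynomial ℚ) ^ D.card * X ^ (G.b1Del D).toNat

/-- A bridge: an edge whose deletion increases the number of connected components. -/
def IsBridge (e : G.EdgeSet) : Prop := G.b0Del ∅ < G.b0Del {e}

/-- `e` is a coloop of the deletion `G − D`: the two boundary components of `G − D`
adjacent to (parallel to) the edge `e` coincide. -/
def IsColoopIn (D : Finset G.EdgeSet) (e : G.EdgeSet) : Prop :=
  e ∉ D ∧ ∃ a, G.edgeOf a = e ∧ Relation.EqvGen (G.faceStep D) a (G.edgePair a)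

/-- A coloop of `G`: the two boundary components adjacent to the edge coincide
(equivalently, the dual edge is a loop of the dual graph). -/
def IsColoop (e : G.EdgeSet) : Prop := G.IsColoopIn ∅ e

/-- Degree of the vertex containing the half-edge `h`: the length of its rotation cycle. -/
def vertexDegree (h : G.H) : ℕ := Nat.card {x : G.H // G.rot.SameCycle h x}

/-- Degree of a vertex: the number of half-edges incident to it. -/
def vDeg (v : G.VertexSet) : ℕ := Nat.card {h : G.H // G.vertexOf h = v}

end RibbonGraph



variable {α : Type*}

/-- Relation obtained from a setoid by gluing the classes of `a` and `b`. -/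
def glueRel (s : Setoid α) (a b : α) (x y : α) : Prop :=
  s.r x y ∨ (s.r x a ∧ s.r b y) ∨ (s.r x b ∧ s.r a y)

theorem glueRel_equiv (s : Setoid α) (a b : α) : Equivalence (glueRel s a b) := by
  constructor
  · intro x; exact Or.inl (s.refl x)
  · rintro x y (h | ⟨h1, h2⟩ | ⟨h1, h2⟩)
    · exact Or.inl (s.symm h)
    · exact Or.inr (Or.inr ⟨s.symm h2, s.symm h1⟩)
    · exact Or.inr (Or.inl ⟨s.symm h2, s.symm h1⟩)
  · rintro x y z (h | ⟨h1, h2⟩ | ⟨h1, h2⟩) (h' | ⟨h1', h2'⟩ | ⟨h1', h2'⟩)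
    · exact Or.inl (s.trans h h')
    · exact Or.inr (Or.inl ⟨s.trans h h1', h2'⟩)
    · exact Or.inr (Or.inr ⟨s.trans h h1', h2'⟩)
    · exact Or.inr (Or.inl ⟨h1, s.trans h2 h'⟩)
    · exact Or.inl (s.trans h1 (s.trans (s.symm (s.trans h2 h1')) h2'))
    · exact Or.inl (s.trans h1 h2')
    · exact Or.inr (Or.inr ⟨h1, s.trans h2 h'⟩)
    · exact Or.inl (s.trans h1 h2')
    · exact Or.inl (s.trans (s.trans h1 (s.symm (s.trans h2 h1'))) h2')

/-- The setoid obtained by gluing the classes of `a` and `b`. -/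
def glueSetoid (s : Setoid α) (a b : α) : Setoid α :=
  ⟨glueRel s a b, glueRel_equiv s a b⟩

theorem glueSetoid_self (s : Setoid α) (a b : α) (hab : s.r a b) :
    glueSetoid s a b = s := by
  apply Setoid.ext
  intro x y
  constructor
  · rintro (h | ⟨h1, h2⟩ | ⟨h1, h2⟩)
    · exact h
    · exact s.trans h1 (s.trans hab h2)
    · exact s.trans h1 (s.trans (s.symm hab) h2)
  · exact fun h => Or.inl h

theorem card_quotient_glue [Finite α] (s : Setoid α) (a b : α) (hab : ¬ s.r a b) :
    Nat.card (Quotient (glueSetoid s a b)) + 1 = Nat.card (Quotient s) := by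
  set t := glueSetoid s a b with ht
  let F : Quotient t → {q : Quotient s // q ≠ Quotient.mk s b} := fun c =>
    Quotient.liftOn c (fun x => if hx : s.r x b then
        ⟨Quotient.mk s a, fun hq => hab (Quotient.exact hq)⟩
      else ⟨Quotient.mk s x, fun hq => hx (Quotient.exact hq)⟩)
      (by
        rintro x y (h | ⟨h1, h2⟩ | ⟨h1, h2⟩) <;> split_ifs with hxb hyb hyb <;>
        first
          | rfl
          | exact Subtype.ext (Quotient.sound h)
          | exact Subtype.ext (Quotient.sound h1)
          | exact Subtype.ext (Quotient.sound h2)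
          | exact absurd (s.trans (s.symm h) hxb) hyb
          | exact absurd (s.trans h hyb) hxb
          | exact absurd (s.trans (s.symm h1) hxb) hab
          | exact absurd (s.symm h2) hyb
          | exact absurd h1 hxb)
  have hst : ∀ x y : α, s.r x y → t.r x y := fun x y h => Or.inl h
  let Gmap : {q : Quotient s // q ≠ Quotient.mk s b} → Quotient t := fun q =>
    Quotient.liftOn q.1 (fun x => Quotient.mk t x)
      (fun x y h => Quotient.sound (hst x y h))
  have hFG : ∀ q, F (Gmap q) = q := by
    rintro ⟨q, hq⟩
    obtain ⟨x, rfl⟩ := Quotient.exists_rep q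
    have hxb : ¬ s.r x b := fun h => hq (Quotient.sound h)
    apply Subtype.ext
    simp only [F, Gmap, Quotient.liftOn_mk, dif_neg hxb]
  have hGF : ∀ c, Gmap (F c) = c := by
    intro c
    obtain ⟨x, rfl⟩ := Quotient.exists_rep c
    by_cases hxb : s.r x b
    · simp only [F, Gmap, Quotient.liftOn_mk, dif_pos hxb]
      exact Quotient.sound (Or.inr (Or.inl ⟨s.refl a, s.symm hxb⟩))
    · simp only [F, Gmap, Quotient.liftOn_mk, dif_neg hxb]
  let E : Quotient t ≃ {q : Quotient s // q ≠ Quotient.mk s b} := ⟨F, Gmap, hGF, hFG⟩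
  haveI : Unique {q : Quotient s // q = Quotient.mk s b} :=
    ⟨⟨⟨Quotient.mk s b, rfl⟩⟩, by rintro ⟨q, rfl⟩; rfl⟩
  have h1 : Nat.card (Quotient s) =
      Nat.card {q : Quotient s // q = Quotient.mk s b}
      + Nat.card {q : Quotient s // ¬ q = Quotient.mk s b} := by
    rw [← Nat.card_sum]
    exact (Nat.card_congr (Equiv.sumCompl (fun q : Quotient s => q = Quotient.mk s b))).symm
  have h2 : Nat.card {q : Quotient s // q = Quotient.mk s b} = 1 := Nat.card_unique
  have h3 : Nat.card (Quotient t) = Nat.card {q : Quotient s // ¬ q = Quotient.mk s b} :=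
    Nat.card_congr E
  omega


variable {α : Type*}

/-- Counting classes of a setoid whose classes are either inside `P` or singletons. -/
theorem card_quotient_split [Finite α] (s : Setoid α) (P : α → Prop)
    (hs : ∀ x y, s.r x y → x = y ∨ (P x ∧ P y)) :
    Nat.card (Quotient s) =
      Nat.card {c : Quotient s // ∃ h, P h ∧ Quotient.mk s h = c}
      + Nat.card {x : α // ¬ P x} := by
  rw [← Nat.card_sum]
  apply Nat.card_congr
  refine Equiv.trans (Equiv.sumCompl
    (fun c : Quotient s => ∃ h, P h ∧ Quotient.mk s h = c)).symm ?_
  apply Equiv.sumCongr (Equiv.refl _)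
  refine Equiv.symm (Equiv.ofBijective (fun x =>
    ⟨Quotient.mk s x.1, fun ⟨h, hP, hmk⟩ => ?_⟩) ⟨?_, ?_⟩)
  · rcases hs h x.1 (Quotient.exact hmk) with rfl | ⟨_, hPx⟩
    · exact x.2 hP
    · exact x.2 hPx
  · rintro ⟨x, hx⟩ ⟨y, hy⟩ hxy
    rcases hs x y (Quotient.exact (Subtype.mk_eq_mk.mp hxy)) with rfl | ⟨hPx, _⟩
    · rfl
    · exact absurd hPx hx
  · rintro ⟨c, hc⟩
    obtain ⟨x, rfl⟩ := Quotient.exists_rep c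
    have hx : ¬ P x := fun hP => hc ⟨x, hP, rfl⟩
    exact ⟨⟨x, hx⟩, rfl⟩

/-- Two setoids agreeing on `P`-points have the same `P`-represented classes. -/
theorem card_quotient_eq_on [Finite α] (s t : Setoid α) (P : α → Prop)
    (hst : ∀ x y, P x → (s.r x y ↔ t.r x y)) :
    Nat.card {c : Quotient s // ∃ h, P h ∧ Quotient.mk s h = c}
      = Nat.card {c : Quotient t // ∃ h, P h ∧ Quotient.mk t h = c} := by
  apply Nat.card_congr
  have hPchoose : ∀ c : {c : Quotient s // ∃ h, P h ∧ Quotient.mk s h = c},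
      P (Classical.choose c.2) ∧ Quotient.mk s (Classical.choose c.2) = c.1 :=
    fun c => Classical.choose_spec c.2
  refine Equiv.ofBijective (fun c => ⟨Quotient.mk t (Classical.choose c.2),
    ⟨Classical.choose c.2, (hPchoose c).1, rfl⟩⟩) ⟨?_, ?_⟩
  · rintro c c' hcc
    obtain ⟨hP, hmk⟩ := hPchoose c
    obtain ⟨hP', hmk'⟩ := hPchoose c'
    apply Subtype.ext
    rw [← hmk, ← hmk']
    exact Quotient.sound ((hst _ _ hP).mpr (Quotient.exact (Subtype.mk_eq_mk.mp hcc)))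
  · rintro ⟨c, hc⟩
    obtain ⟨h, hP, rfl⟩ := hc
    refine ⟨⟨Quotient.mk s h, ⟨h, hP, rfl⟩⟩, Subtype.ext ?_⟩
    set c' : {c : Quotient s // ∃ h, P h ∧ Quotient.mk s h = c} := ⟨Quotient.mk s h, ⟨h, hP, rfl⟩⟩
    obtain ⟨hP2, hmk2⟩ := hPchoose c'
    exact Quotient.sound ((hst _ _ hP2).mp (Quotient.exact hmk2))

/-- Mono lemma for EqvGen. -/
theorem eqvGen_mono' {r p : α → α → Prop} (h : ∀ x y, r x y → Relation.EqvGen p x y)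
    {x y : α} (hxy : Relation.EqvGen r x y) : Relation.EqvGen p x y := by
  induction hxy with
  | rel x y hr => exact h x y hr
  | refl x => exact Relation.EqvGen.refl x
  | symm x y _ ih => exact ih.symm _ _
  | trans x y z _ _ ih ih' => exact ih.trans _ _ _ ih'

/-- The setoid of cycles of a permutation. -/
def cycSetoid (f : Equiv.Perm α) : Setoid α :=
  ⟨f.SameCycle, ⟨fun _ => Equiv.Perm.SameCycle.refl _ _, fun h => h.symm, fun h h' => h.trans h'⟩⟩

theorem sameCycle_reach {f : Equiv.Perm α} {r : α → α → Prop}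
    (hrefl : Reflexive r) (htrans : Transitive r) (hstep : ∀ z, r z (f z)) (x : α) :
    ∀ n : ℕ, r x ((f ^ n) x) := by
  intro n
  induction n with
  | zero => exact hrefl x
  | succ n ih =>
    have : (f ^ (n + 1)) x = f ((f ^ n) x) := by
      rw [pow_succ', Equiv.Perm.mul_apply]
    rw [this]
    exact htrans ih (hstep _)

theorem sameCycle_elim [Finite α] {f : Equiv.Perm α} {r : α → α → Prop}
    (hrefl : Reflexive r) (htrans : Transitive r) (hstep : ∀ z, r z (f z))
    {x y : α} (h : f.SameCycle x y) : r x y := by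
  obtain ⟨n, _, hn⟩ := h.exists_pow_eq'
  exact hn ▸ sameCycle_reach hrefl htrans hstep x n

theorem sameCycle_fixed {f : Equiv.Perm α} {x y : α} (hx : f x = x)
    (h : f.SameCycle x y) : y = x := by
  obtain ⟨n, hn⟩ := h
  rw [← hn, Equiv.Perm.zpow_apply_eq_self_of_apply_eq_self hx]


variable {α : Type*}

theorem pow_apply_mod {ρ : Equiv.Perm α} {z : α} {m : ℕ} (hm : (ρ ^ m) z = z)
    (hm0 : 0 < m) (i : ℕ) : (ρ ^ i) z = (ρ ^ (i % m)) z := by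
  have key : ∀ k, ((ρ ^ m) ^ k) z = z := by
    intro k
    induction k with
    | zero => simp
    | succ k ih => rw [pow_succ, Equiv.Perm.mul_apply, hm, ih]
  conv_lhs => rw [← Nat.mod_add_div i m]
  rw [pow_add, Equiv.Perm.mul_apply, pow_mul, key]

theorem inv_pow_apply_of_le {ρ : Equiv.Perm α} {z : α} {m j : ℕ} (hj : j ≤ m) :
    ((ρ⁻¹) ^ j) ((ρ ^ m) z) = (ρ ^ (m - j)) z := by
  have : (ρ ^ m) z = (ρ ^ j) ((ρ ^ (m - j)) z) := by
    rw [← Equiv.Perm.mul_apply, ← pow_add, Nat.add_sub_cancel' hj]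
  rw [this, inv_pow]
  exact Equiv.symm_apply_apply _ _

/-- First non-deleted element strictly after `z` in the `ρ`-orbit of `z`. -/
def firstKept (del : α → Prop) (ρ : Equiv.Perm α) (z : α) : α :=
  if h : ∃ m, 0 < m ∧ ¬ del ((ρ ^ m) z) then (ρ ^ (Nat.find h)) z else z

theorem firstKept_exists [Finite α] {del : α → Prop} (ρ : Equiv.Perm α) {z : α}
    (hz : ¬ del z) : ∃ m, 0 < m ∧ ¬ del ((ρ ^ m) z) := by
  cases nonempty_fintype α
  refine ⟨orderOf ρ, orderOf_pos ρ, ?_⟩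
  rw [pow_orderOf_eq_one]
  exact hz

theorem firstKept_spec {del : α → Prop} {ρ : Equiv.Perm α} {z : α}
    (h : ∃ m, 0 < m ∧ ¬ del ((ρ ^ m) z)) :
    ∃ m, 0 < m ∧ firstKept del ρ z = (ρ ^ m) z ∧ ¬ del ((ρ ^ m) z) ∧
      ∀ j, 0 < j → j < m → del ((ρ ^ j) z) := by
  refine ⟨Nat.find h, (Nat.find_spec h).1, by rw [firstKept, dif_pos h], (Nat.find_spec h).2, ?_⟩
  intro j hj0 hjm
  by_contra hdel
  exact Nat.find_min h hjm ⟨hj0, hdel⟩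

theorem firstKept_eq {del : α → Prop} {ρ : Equiv.Perm α} {z : α} {m : ℕ}
    (hm0 : 0 < m) (hk : ¬ del ((ρ ^ m) z)) (hd : ∀ j, 0 < j → j < m → del ((ρ ^ j) z)) :
    firstKept del ρ z = (ρ ^ m) z := by
  have h : ∃ m, 0 < m ∧ ¬ del ((ρ ^ m) z) := ⟨m, hm0, hk⟩
  obtain ⟨m', hm0', heq, hk', hd'⟩ := firstKept_spec h
  rcases lt_trichotomy m' m with hlt | rfl | hlt
  · exact absurd (hd m' hm0' hlt) hk'
  · exact heq
  · exact absurd (hd' m hm0 hlt) hk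

theorem firstKept_kept [Finite α] {del : α → Prop} {ρ : Equiv.Perm α} {z : α}
    (hz : ¬ del z) : ¬ del (firstKept del ρ z) := by
  obtain ⟨m, _, heq, hk, _⟩ := firstKept_spec (firstKept_exists ρ hz)
  rw [heq]; exact hk

theorem firstKept_mirror [Finite α] {del : α → Prop} {ρ : Equiv.Perm α} {z : α}
    (hz : ¬ del z) : firstKept del ρ⁻¹ (firstKept del ρ z) = z := by
  obtain ⟨m, hm0, heq, hk, hd⟩ := firstKept_spec (firstKept_exists ρ hz)
  rw [heq]
  have : z = ((ρ⁻¹) ^ m) ((ρ ^ m) z) := by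
    rw [inv_pow_apply_of_le le_rfl, Nat.sub_self, pow_zero]; rfl
  rw [firstKept_eq hm0
    (by rw [inv_pow_apply_of_le le_rfl, Nat.sub_self, pow_zero]; exact hz)]
  · exact this.symm
  · intro j hj0 hjm
    rw [inv_pow_apply_of_le hjm.le]
    exact hd (m - j) (by omega) (by omega)

theorem firstKept_self_iff [Finite α] {del : α → Prop} {ρ : Equiv.Perm α} {z : α}
    (hz : ¬ del z) :
    firstKept del ρ z = z ↔ ∀ h, ρ.SameCycle z h → h ≠ z → del h := by
  obtain ⟨m, hm0, heq, hk, hd⟩ := firstKept_spec (firstKept_exists ρ hz)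
  constructor
  · intro hfz h hcyc hne
    obtain ⟨i, _, hi⟩ := hcyc.exists_pow_eq'
    have hmz : (ρ ^ m) z = z := by rw [← heq, hfz]
    rw [← hi, pow_apply_mod hmz hm0 i]
    rcases Nat.eq_zero_or_pos (i % m) with h0 | hpos
    · rw [← hi, pow_apply_mod hmz hm0 i, h0, pow_zero] at hne
      simp at hne
    · exact hd _ hpos (Nat.mod_lt _ hm0)
  · intro hall
    rw [heq]
    by_contra hne
    exact hk (hall _ ⟨(m : ℤ), by rw [zpow_natCast]⟩ hne)
namespace RibbonGraph

variable {G : RibbonGraph}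

theorem edgePair_sq (G : RibbonGraph) : G.edgePair ^ (2 : ℤ) = 1 := by
  ext z
  have : G.edgePair ^ (2 : ℤ) = G.edgePair * G.edgePair := by
    rw [show (2 : ℤ) = 1 + 1 by norm_num, zpow_add, zpow_one]
  rw [this]
  simp [G.edgePair_invol]

theorem edgeOf_edgePair (x : G.H) : G.edgeOf (G.edgePair x) = G.edgeOf x :=
  Quotient.sound ⟨1, by simp [G.edgePair_invol]⟩

theorem edgeOf_eq_iff {x y : G.H} : G.edgeOf x = G.edgeOf y ↔ x = y ∨ x = G.edgePair y := by
  constructor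
  · intro h
    obtain ⟨i, hi⟩ : G.edgePair.SameCycle x y := Quotient.exact h
    rcases Int.even_or_odd i with ⟨k, hk⟩ | ⟨k, hk⟩
    · left
      rw [hk, ← two_mul, zpow_mul, edgePair_sq, one_zpow] at hi
      simpa using hi
    · right
      rw [hk, zpow_add, zpow_mul, edgePair_sq, one_zpow, one_mul, zpow_one] at hi
      rw [← hi]
      exact (G.edgePair_invol x).symm
  · rintro (rfl | rfl)
    · rfl
    · exact edgeOf_edgePair y

end RibbonGraph
namespace RibbonGraph

variable {G : RibbonGraph}

/-- The face permutation of the deletion `G − D`. -/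
def phiFun (G : RibbonGraph) (D : Finset G.EdgeSet) (x : G.H) : G.H :=
  if G.edgeOf x ∈ D then x else firstKept (fun h => G.edgeOf h ∈ D) G.rot (G.edgePair x)

def phiInvFun (G : RibbonGraph) (D : Finset G.EdgeSet) (x : G.H) : G.H :=
  if G.edgeOf x ∈ D then x else G.edgePair (firstKept (fun h => G.edgeOf h ∈ D) G.rot⁻¹ x)

/-- Graph-specific wrappers around `firstKept`. -/
theorem fkG_spec {D : Finset G.EdgeSet} {z : G.H} (hz : G.edgeOf z ∉ D) :
    ∃ m, 0 < m ∧ firstKept (fun h => G.edgeOf h ∈ D) G.rot z = (G.rot ^ m) z ∧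
      G.edgeOf ((G.rot ^ m) z) ∉ D ∧ ∀ j, 0 < j → j < m → G.edgeOf ((G.rot ^ j) z) ∈ D :=
  firstKept_spec (del := fun h => G.edgeOf h ∈ D)
    (firstKept_exists (del := fun h => G.edgeOf h ∈ D) G.rot hz)

theorem fkG_eq {D : Finset G.EdgeSet} {z : G.H} {m : ℕ} (hm0 : 0 < m)
    (hk : G.edgeOf ((G.rot ^ m) z) ∉ D) (hd : ∀ j, 0 < j → j < m → G.edgeOf ((G.rot ^ j) z) ∈ D) :
    firstKept (fun h => G.edgeOf h ∈ D) G.rot z = (G.rot ^ m) z :=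
  firstKept_eq (del := fun h => G.edgeOf h ∈ D) hm0 hk hd

theorem fkG_kept {D : Finset G.EdgeSet} {z : G.H} (hz : G.edgeOf z ∉ D) :
    G.edgeOf (firstKept (fun h => G.edgeOf h ∈ D) G.rot z) ∉ D :=
  firstKept_kept (del := fun h => G.edgeOf h ∈ D) hz

theorem fkG_self_iff {D : Finset G.EdgeSet} {z : G.H} (hz : G.edgeOf z ∉ D) :
    firstKept (fun h => G.edgeOf h ∈ D) G.rot z = z ↔
      ∀ h, G.rot.SameCycle z h → h ≠ z → G.edgeOf h ∈ D :=
  firstKept_self_iff (del := fun h => G.edgeOf h ∈ D) hz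

theorem phiFun_of_del {D : Finset G.EdgeSet} {x : G.H} (hx : G.edgeOf x ∈ D) :
    G.phiFun D x = x := if_pos hx

theorem phiFun_of_kept {D : Finset G.EdgeSet} {x : G.H} (hx : G.edgeOf x ∉ D) :
    G.phiFun D x = firstKept (fun h => G.edgeOf h ∈ D) G.rot (G.edgePair x) := if_neg hx

theorem phiFun_kept {D : Finset G.EdgeSet} {x : G.H} (hx : G.edgeOf x ∉ D) :
    G.edgeOf (G.phiFun D x) ∉ D := by
  rw [phiFun_of_kept hx]
  exact fkG_kept (by rw [edgeOf_edgePair]; exact hx)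

theorem phiInvFun_phiFun (D : Finset G.EdgeSet) (x : G.H) :
    G.phiInvFun D (G.phiFun D x) = x := by
  by_cases hx : G.edgeOf x ∈ D
  · rw [phiFun_of_del hx, phiInvFun, if_pos hx]
  · have hk := phiFun_kept (G := G) hx
    rw [phiInvFun, if_neg hk, phiFun_of_kept hx,
      firstKept_mirror (del := fun h => G.edgeOf h ∈ D)
        (show ¬ (G.edgeOf (G.edgePair x) ∈ D) by rw [edgeOf_edgePair]; exact hx),
      G.edgePair_invol]

theorem phiFun_phiInvFun (D : Finset G.EdgeSet) (x : G.H) :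
    G.phiFun D (G.phiInvFun D x) = x := by
  by_cases hx : G.edgeOf x ∈ D
  · rw [phiInvFun, if_pos hx, phiFun_of_del hx]
  · have hk1 : G.edgeOf (firstKept (fun h => G.edgeOf h ∈ D) G.rot⁻¹ x) ∉ D :=
      firstKept_kept (del := fun h => G.edgeOf h ∈ D) (ρ := G.rot⁻¹) hx
    have hk : G.edgeOf (G.phiInvFun D x) ∉ D := by
      rw [phiInvFun, if_neg hx, edgeOf_edgePair]; exact hk1
    rw [phiFun_of_kept hk, phiInvFun, if_neg hx, G.edgePair_invol]
    have := firstKept_mirror (del := fun h => G.edgeOf h ∈ D) (ρ := G.rot⁻¹) (z := x) hx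
    rwa [inv_inv] at this

/-- The face permutation of `G − D` as a permutation (identity on deleted half-edges). -/
def phiPerm (G : RibbonGraph) (D : Finset G.EdgeSet) : Equiv.Perm G.H :=
  ⟨G.phiFun D, G.phiInvFun D, phiInvFun_phiFun D, phiFun_phiInvFun D⟩

@[simp] theorem phiPerm_apply (D : Finset G.EdgeSet) (x : G.H) :
    G.phiPerm D x = G.phiFun D x := rfl

theorem faceStep_iff {D : Finset G.EdgeSet} {x y : G.H} :
    G.faceStep D x y ↔ (G.edgeOf x ∉ D ∧ y = G.phiFun D x) := by
  constructor
  · rintro ⟨hkx, hky, m, hm0, hy, hint⟩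
    refine ⟨hkx, ?_⟩
    rw [phiFun_of_kept hkx, firstKept_eq hm0 ?_ hint, hy]
    rw [← hy]; exact hky
  · rintro ⟨hkx, rfl⟩
    have hkpair : G.edgeOf (G.edgePair x) ∉ D := by rw [edgeOf_edgePair]; exact hkx
    obtain ⟨m, hm0, heq, hk, hd⟩ := fkG_spec hkpair
    exact ⟨hkx, by rw [phiFun_of_kept hkx, heq]; exact hk,
      m, hm0, by rw [phiFun_of_kept hkx, heq], hd⟩

/-- Connectivity helpers. -/
theorem conn_rot_pow (D : Finset G.EdgeSet) (z : G.H) (m : ℕ) :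
    Relation.EqvGen (G.connStep D) z ((G.rot ^ m) z) :=
  Relation.EqvGen.rel _ _ (Or.inl ⟨(m : ℤ), by rw [zpow_natCast]⟩)

theorem conn_edgePair {D : Finset G.EdgeSet} {x : G.H} (hx : G.edgeOf x ∉ D) :
    Relation.EqvGen (G.connStep D) x (G.edgePair x) :=
  Relation.EqvGen.rel _ _ (Or.inr ⟨hx, rfl⟩)

theorem conn_mono {D D' : Finset G.EdgeSet} (hDD : D ⊆ D') {x y : G.H}
    (h : Relation.EqvGen (G.connStep D') x y) : Relation.EqvGen (G.connStep D) x y := by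
  refine eqvGen_mono' (fun x y hr => Relation.EqvGen.rel _ _ ?_) h
  rcases hr with h | ⟨hk, he⟩
  · exact Or.inl h
  · exact Or.inr ⟨fun hD => hk (hDD hD), he⟩

/-- A `phiFun D` step stays within connected components of any `G − D''` with `D ⊆ D''`,
as long as the starting half-edge is kept in `G − D''`. -/
theorem conn_phiFun_step {D D'' : Finset G.EdgeSet} {x : G.H}
    (hx : G.edgeOf x ∉ D'') (hxD : G.edgeOf x ∉ D) :
    Relation.EqvGen (G.connStep D'') x (G.phiFun D x) := by
  have hkpair : G.edgeOf (G.edgePair x) ∉ D := by rw [edgeOf_edgePair]; exact hxD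
  obtain ⟨m, hm0, heq, hk, hd⟩ := fkG_spec hkpair
  rw [phiFun_of_kept hxD, heq]
  exact (conn_edgePair hx).trans _ _ _ (conn_rot_pow D'' (G.edgePair x) m)

end RibbonGraph
namespace RibbonGraph

variable {G : RibbonGraph} {D : Finset G.EdgeSet} {a : G.H}

theorem edgeOf_eq_e_iff {x : G.H} : G.edgeOf x = G.edgeOf a ↔ x = a ∨ x = G.edgePair a :=
  edgeOf_eq_iff

theorem keptD'_iff {x : G.H} :
    G.edgeOf x ∉ insert (G.edgeOf a) D ↔ (G.edgeOf x ∉ D ∧ x ≠ a ∧ x ≠ G.edgePair a) := by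
  rw [Finset.mem_insert]
  constructor
  · intro h
    refine ⟨fun hD => h (Or.inr hD), fun hxa => h (Or.inl ?_), fun hxb => h (Or.inl ?_)⟩
    · rw [hxa]
    · rw [edgeOf_eq_e_iff]; exact Or.inr hxb
  · rintro ⟨hD, hxa, hxb⟩ (he | hD')
    · rcases edgeOf_eq_e_iff.mp he with rfl | rfl
      · exact hxa rfl
      · exact hxb rfl
    · exact hD hD'

theorem not_rot_sameCycle
    (hNC : ¬ Relation.EqvGen (G.connStep (insert (G.edgeOf a) D)) a (G.edgePair a)) :
    ¬ G.rot.SameCycle a (G.edgePair a) :=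
  fun h => hNC (Relation.EqvGen.rel _ _ (Or.inl h))

theorem phiD'_fix_a : G.phiFun (insert (G.edgeOf a) D) a = a :=
  phiFun_of_del (Finset.mem_insert_self _ _)

theorem phiD'_fix_b : G.phiFun (insert (G.edgeOf a) D) (G.edgePair a) = G.edgePair a :=
  phiFun_of_del (by rw [edgeOf_edgePair]; exact Finset.mem_insert_self _ _)

theorem edgeOf_b_kept (hae : G.edgeOf a ∉ D) : G.edgeOf (G.edgePair a) ∉ D := by
  rw [edgeOf_edgePair]; exact hae

/-- The key trichotomy: how the face permutation changes after deleting the edge of `a`. -/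
theorem phiD'_cases (hae : G.edgeOf a ∉ D)
    (hNC : ¬ Relation.EqvGen (G.connStep (insert (G.edgeOf a) D)) a (G.edgePair a))
    {x : G.H} (hx : G.edgeOf x ∉ insert (G.edgeOf a) D) :
    (G.phiFun D x ≠ a ∧ G.phiFun D x ≠ G.edgePair a ∧
      G.phiFun (insert (G.edgeOf a) D) x = G.phiFun D x)
    ∨ (G.phiFun D x = a ∧
        G.phiFun (insert (G.edgeOf a) D) x = G.phiFun D (G.edgePair a) ∧
        G.phiFun D (G.edgePair a) ≠ a ∧ G.phiFun D (G.edgePair a) ≠ G.edgePair a)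
    ∨ (G.phiFun D x = G.edgePair a ∧
        G.phiFun (insert (G.edgeOf a) D) x = G.phiFun D a ∧
        G.phiFun D a ≠ a ∧ G.phiFun D a ≠ G.edgePair a) := by
  obtain ⟨hxD, hxa, hxb⟩ := keptD'_iff.mp hx
  have hkpair : G.edgeOf (G.edgePair x) ∉ D := by rw [edgeOf_edgePair]; exact hxD
  have hkpairD' : G.edgeOf (G.edgePair x) ∉ insert (G.edgeOf a) D := by
    rw [edgeOf_edgePair]
    exact fun hmem => hx (by rwa [Finset.mem_insert] at hmem ⊢)
  have hpaira : G.edgePair x ≠ a := fun h => (keptD'_iff.mp hkpairD').2.1 h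
  have hpairb : G.edgePair x ≠ G.edgePair a := fun h => (keptD'_iff.mp hkpairD').2.2 h
  obtain ⟨m, hm0, heq, hk, hd⟩ := fkG_spec hkpair
  have hφx : G.phiFun D x = (G.rot ^ m) (G.edgePair x) := by rw [phiFun_of_kept hxD, heq]
  by_cases hca : G.phiFun D x = a
  · -- the walk hits `a`; continue from `a`
    right; left
    have hub : G.phiFun D (G.edgePair a) = firstKept (fun h => G.edgeOf h ∈ D) G.rot a := by
      rw [phiFun_of_kept (edgeOf_b_kept hae), G.edgePair_invol]
    obtain ⟨m₁, hm10, heq₂, hk₂, hd₂⟩ := fkG_spec hae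
    have hu : G.phiFun D (G.edgePair a) = (G.rot ^ m₁) a := by rw [hub, heq₂]
    have hra : (G.rot ^ m) (G.edgePair x) = a := by rw [← hφx, hca]
    have hune_b : G.phiFun D (G.edgePair a) ≠ G.edgePair a := by
      intro h
      exact not_rot_sameCycle hNC ⟨(m₁ : ℤ), by rw [zpow_natCast, ← hu, h]⟩
    have hune_a : G.phiFun D (G.edgePair a) ≠ a := by
      intro h
      rw [hub] at h
      have := (fkG_self_iff hae).mp h (G.edgePair x)
        ⟨-(m : ℤ), by rw [← hra]; simp [zpow_neg, zpow_natCast]⟩ hpaira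
      exact hkpair this
    refine ⟨hca, ?_, hune_a, hune_b⟩
    rw [phiFun_of_kept hx, hu]
    have hval : (G.rot ^ (m₁ + m)) (G.edgePair x) = (G.rot ^ m₁) a := by
      rw [pow_add, Equiv.Perm.mul_apply, hra]
    rw [fkG_eq (Nat.add_pos_left hm10 m) (by
        rw [hval, ← hu]
        rw [keptD'_iff]
        exact ⟨by rw [hu, ← heq₂, ← hub]; rw [hub, heq₂] at *; exact hk₂, hune_a, hune_b⟩)
      (fun j hj0 hjm => ?_), hval]
    rcases lt_trichotomy j m with hlt | rfl | hgt
    · exact Finset.mem_insert_of_mem (hd j hj0 hlt)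
    · rw [hra]; exact Finset.mem_insert_self _ _
    · have : (G.rot ^ j) (G.edgePair x) = (G.rot ^ (j - m)) a := by
        conv_lhs => rw [show j = (j - m) + m from (Nat.sub_add_cancel hgt.le).symm]
        rw [pow_add, Equiv.Perm.mul_apply, hra]
      rw [this]
      exact Finset.mem_insert_of_mem (hd₂ (j - m) (by omega) (by omega))
  by_cases hcb : G.phiFun D x = G.edgePair a
  · -- the walk hits `b`; continue from `b`
    right; right
    have hub : G.phiFun D a = firstKept (fun h => G.edgeOf h ∈ D) G.rot (G.edgePair a) := by
      rw [phiFun_of_kept hae]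
    obtain ⟨m₁, hm10, heq₂, hk₂, hd₂⟩ := fkG_spec (edgeOf_b_kept hae)
    have hu : G.phiFun D a = (G.rot ^ m₁) (G.edgePair a) := by rw [hub, heq₂]
    have hra : (G.rot ^ m) (G.edgePair x) = G.edgePair a := by rw [← hφx, hcb]
    have hune_a : G.phiFun D a ≠ a := by
      intro h
      exact not_rot_sameCycle hNC (Equiv.Perm.SameCycle.symm
        ⟨(m₁ : ℤ), by rw [zpow_natCast, ← hu, h]⟩)
    have hune_b : G.phiFun D a ≠ G.edgePair a := by
      intro h
      rw [hub] at h
      have := (fkG_self_iff (edgeOf_b_kept hae)).mp h (G.edgePair x)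
        ⟨-(m : ℤ), by rw [← hra]; simp [zpow_neg, zpow_natCast]⟩ hpairb
      exact hkpair this
    refine ⟨hcb, ?_, hune_a, hune_b⟩
    rw [phiFun_of_kept hx, hu]
    have hval : (G.rot ^ (m₁ + m)) (G.edgePair x) = (G.rot ^ m₁) (G.edgePair a) := by
      rw [pow_add, Equiv.Perm.mul_apply, hra]
    rw [fkG_eq (Nat.add_pos_left hm10 m) (by
        rw [hval, ← hu]
        rw [keptD'_iff]
        exact ⟨by rw [hu] at *; rw [← heq₂, ← hub] at *; rw [hub, heq₂] at *; exact hk₂,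
          hune_a, hune_b⟩)
      (fun j hj0 hjm => ?_), hval]
    rcases lt_trichotomy j m with hlt | rfl | hgt
    · exact Finset.mem_insert_of_mem (hd j hj0 hlt)
    · rw [hra, edgeOf_edgePair]; exact Finset.mem_insert_self _ _
    · have : (G.rot ^ j) (G.edgePair x) = (G.rot ^ (j - m)) (G.edgePair a) := by
        conv_lhs => rw [show j = (j - m) + m from (Nat.sub_add_cancel hgt.le).symm]
        rw [pow_add, Equiv.Perm.mul_apply, hra]
      rw [this]
      exact Finset.mem_insert_of_mem (hd₂ (j - m) (by omega) (by omega))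
  · -- the walk avoids `a` and `b`
    left
    refine ⟨hca, hcb, ?_⟩
    rw [phiFun_of_kept hx, hφx]
    refine fkG_eq hm0 ?_ (fun j hj0 hjm => Finset.mem_insert_of_mem (hd j hj0 hjm))
    rw [keptD'_iff]
    exact ⟨hk, by rw [← hφx]; exact hca, by rw [← hφx]; exact hcb⟩

end RibbonGraph
namespace RibbonGraph

variable {G : RibbonGraph} {D : Finset G.EdgeSet} {a : G.H}

/-- On the deletion of a bridge, the two half-edges of the bridge lie on the same face. -/
theorem bridge_sameCycle (hae : G.edgeOf a ∉ D)
    (hNC : ¬ Relation.EqvGen (G.connStep (insert (G.edgeOf a) D)) a (G.edgePair a)) :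
    (G.phiPerm D).SameCycle a (G.edgePair a) := by
  by_contra hn
  set D' := insert (G.edgeOf a) D with hD'
  set φ := G.phiPerm D with hφ
  have base : G.edgeOf (φ a) ∉ D ∧
      Relation.EqvGen (G.connStep D') (G.edgePair a) (φ a) := by
    constructor
    · exact phiFun_kept hae
    · obtain ⟨m, hm0, heq, hk, hd⟩ := fkG_spec (edgeOf_b_kept hae)
      have : φ a = (G.rot ^ m) (G.edgePair a) := by
        show G.phiFun D a = _
        rw [phiFun_of_kept hae, heq]
      rw [this]
      exact conn_rot_pow D' (G.edgePair a) m
  have main : ∀ n : ℕ, G.edgeOf ((φ ^ (n + 1)) a) ∉ D ∧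
      Relation.EqvGen (G.connStep D') (G.edgePair a) ((φ ^ (n + 1)) a) := by
    intro n
    induction n with
    | zero => simpa using base
    | succ n ih =>
      obtain ⟨ihk, ihc⟩ := ih
      set x := (φ ^ (n + 1)) a with hx
      have hstep : (φ ^ (n + 1 + 1)) a = φ x := by
        rw [pow_succ', Equiv.Perm.mul_apply]
      by_cases hxb : x = G.edgePair a
      · exact absurd ⟨((n : ℤ) + 1), by rw [← hxb, hx]; norm_cast⟩ hn
      by_cases hxa : x = a
      · rw [hstep, hxa]
        exact base
      · have hxD' : G.edgeOf x ∉ D' := keptD'_iff.mpr ⟨ihk, hxa, hxb⟩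
        rw [hstep]
        refine ⟨phiFun_kept ihk, ihc.trans _ _ _ ?_⟩
        exact conn_phiFun_step hxD' ihk
  have hN : (φ ^ (orderOf φ)) a = a := by rw [pow_orderOf_eq_one]; rfl
  have hN1 : orderOf φ - 1 + 1 = orderOf φ := Nat.succ_pred_eq_of_pos (orderOf_pos φ)
  have := (main (orderOf φ - 1)).2
  rw [hN1, hN] at this
  exact hNC (this.symm _ _)

/-- The two half-edges of a bridge are on different cycles of `φ · swap a b`. -/
theorem bridge_not_sameCycle_psi (hae : G.edgeOf a ∉ D)
    (hNC : ¬ Relation.EqvGen (G.connStep (insert (G.edgeOf a) D)) a (G.edgePair a)) :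
    ¬ (G.phiPerm D * Equiv.swap a (G.edgePair a)).SameCycle a (G.edgePair a) := by
  intro hcyc
  set D' := insert (G.edgeOf a) D with hD'
  set ψ := G.phiPerm D * Equiv.swap a (G.edgePair a) with hψ
  have hψa : ψ a = G.phiFun D (G.edgePair a) := by
    simp [hψ, Equiv.Perm.mul_apply, Equiv.swap_apply_left]
  have hψ_of_ne : ∀ z, z ≠ a → z ≠ G.edgePair a → ψ z = G.phiFun D z := by
    intro z h1 h2
    simp [hψ, Equiv.Perm.mul_apply, Equiv.swap_apply_of_ne_of_ne h1 h2]
  obtain ⟨n0, _, hn0⟩ := hcyc.exists_pow_eq'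
  have hPex : ∃ n, (ψ ^ n) a = G.edgePair a := ⟨n0, hn0⟩
  set n := Nat.find hPex with hn
  have hspec : (ψ ^ n) a = G.edgePair a := Nat.find_spec hPex
  have hnpos : 0 < n := by
    rcases Nat.eq_zero_or_pos n with h0 | h
    · rw [h0, pow_zero] at hspec
      exact absurd (by simpa using hspec.symm) (G.edgePair_nofix a)
    · exact h
  have main : ∀ m : ℕ, (∀ k, k ≤ m → (ψ ^ k) a ≠ G.edgePair a) →
      G.edgeOf ((ψ ^ m) a) ∉ D ∧ Relation.EqvGen (G.connStep D') a ((ψ ^ m) a) := by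
    intro m
    induction m with
    | zero =>
      intro _
      exact ⟨by simpa using hae, by simpa using Relation.EqvGen.refl a⟩
    | succ m ih =>
      intro hne
      obtain ⟨ihk, ihc⟩ := ih (fun k hk => hne k (Nat.le_succ_of_le hk))
      set x := (ψ ^ m) a with hx
      have hstep : (ψ ^ (m + 1)) a = ψ x := by rw [pow_succ', Equiv.Perm.mul_apply]
      by_cases hxa : x = a
      · rw [hstep, hxa, hψa]
        have hk2 : G.edgeOf (G.phiFun D (G.edgePair a)) ∉ D := phiFun_kept (edgeOf_b_kept hae)
        obtain ⟨m₂, hm20, heq, hk, hd⟩ := fkG_spec hae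
        have hval : G.phiFun D (G.edgePair a) = (G.rot ^ m₂) a := by
          rw [phiFun_of_kept (edgeOf_b_kept hae), G.edgePair_invol, heq]
        exact ⟨hk2, hval ▸ conn_rot_pow D' a m₂⟩
      · have hxb : x ≠ G.edgePair a := hne m (Nat.le_succ m)
        have hxD' : G.edgeOf x ∉ D' := keptD'_iff.mpr ⟨ihk, hxa, hxb⟩
        rw [hstep, hψ_of_ne x hxa hxb]
        exact ⟨phiFun_kept ihk, ihc.trans _ _ _ (conn_phiFun_step hxD' ihk)⟩
  have hlt : ∀ k, k ≤ n - 1 → (ψ ^ k) a ≠ G.edgePair a := by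
    intro k hk
    exact Nat.find_min hPex (by omega)
  obtain ⟨hkx, hcx⟩ := main (n - 1) hlt
  set x := (ψ ^ (n - 1)) a with hx
  have hstepn : ψ x = G.edgePair a := by
    rw [hx, ← Equiv.Perm.mul_apply, ← pow_succ', Nat.sub_add_cancel hnpos, hspec]
  by_cases hxa : x = a
  · rw [hxa, hψa] at hstepn
    obtain ⟨m₂, hm20, heq, hk, hd⟩ := fkG_spec hae
    have hval : G.phiFun D (G.edgePair a) = (G.rot ^ m₂) a := by
      rw [phiFun_of_kept (edgeOf_b_kept hae), G.edgePair_invol, heq]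
    rw [hval] at hstepn
    exact not_rot_sameCycle hNC ⟨(m₂ : ℤ), by rw [zpow_natCast, hstepn]⟩
  · have hxb : x ≠ G.edgePair a := by
      intro h
      exact Nat.find_min hPex (by omega) h
    rw [hψ_of_ne x hxa hxb] at hstepn
    have hxD' : G.edgeOf x ∉ D' := keptD'_iff.mpr ⟨hkx, hxa, hxb⟩
    have : Relation.EqvGen (G.connStep D') a (G.edgePair a) :=
      hcx.trans _ _ _ (hstepn ▸ conn_phiFun_step hxD' hkx)
    exact hNC this

end RibbonGraph
namespace RibbonGraph

variable {G : RibbonGraph} {D : Finset G.EdgeSet} {a : G.H}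

theorem face_sub {x y : G.H} (h : Relation.EqvGen (G.faceStep D) x y) :
    (G.phiPerm D).SameCycle x y := by
  induction h with
  | rel x y hr =>
    obtain ⟨hk, rfl⟩ := faceStep_iff.mp hr
    exact ⟨1, by simp⟩
  | refl x => exact Equiv.Perm.SameCycle.refl _ _
  | symm x y _ ih => exact ih.symm
  | trans x y z _ _ ih ih' => exact ih.trans ih'

theorem sameCycle_face {x y : G.H} (h : (G.phiPerm D).SameCycle x y) :
    (G.edgeOf x ∉ D ↔ G.edgeOf y ∉ D) ∧
      (G.edgeOf x ∉ D → Relation.EqvGen (G.faceStep D) x y) := by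
  refine sameCycle_elim (r := fun x y => (G.edgeOf x ∉ D ↔ G.edgeOf y ∉ D) ∧
    (G.edgeOf x ∉ D → Relation.EqvGen (G.faceStep D) x y)) ?_ ?_ ?_ h
  · intro z
    exact ⟨Iff.rfl, fun _ => Relation.EqvGen.refl z⟩
  · rintro x y z ⟨hiff, himp⟩ ⟨hiff', himp'⟩
    exact ⟨hiff.trans hiff', fun hk => (himp hk).trans _ _ _ (himp' (hiff.mp hk))⟩
  · intro z
    by_cases hz : G.edgeOf z ∈ D
    · rw [show G.phiPerm D z = z from phiFun_of_del hz]
      exact ⟨Iff.rfl, fun _ => Relation.EqvGen.refl z⟩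
    · exact ⟨by simp only [phiPerm_apply]; exact iff_of_true hz (phiFun_kept hz),
        fun hk => Relation.EqvGen.rel _ _ (faceStep_iff.mpr ⟨hz, rfl⟩)⟩

theorem cardQ_phi (G : RibbonGraph) (D : Finset G.EdgeSet) :
    Nat.card (Quotient (cycSetoid (G.phiPerm D))) =
      Nat.card {c : Quotient (G.faceSetoid D) //
        ∃ h, G.edgeOf h ∉ D ∧ Quotient.mk (G.faceSetoid D) h = c}
      + Nat.card {x : G.H // ¬ G.edgeOf x ∉ D} := by
  rw [card_quotient_split (cycSetoid (G.phiPerm D)) (fun h => G.edgeOf h ∉ D) ?hsplit]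
  case hsplit =>
    intro x y hxy
    by_cases hx : G.edgeOf x ∈ D
    · exact Or.inl (sameCycle_fixed (phiFun_of_del hx) hxy).symm
    · exact Or.inr ⟨hx, ((sameCycle_face hxy).1).mp hx⟩
  congr 1
  refine (card_quotient_eq_on (G.faceSetoid D) (cycSetoid (G.phiPerm D))
    (fun h => G.edgeOf h ∉ D) ?_).symm
  intro x y hPx
  exact ⟨fun h => face_sub h, fun h => (sameCycle_face h).2 hPx⟩

theorem card_or_eq {β : Type*} [Finite β] (P : β → Prop) (w : β) (hw : ¬ P w) :
    Nat.card {v : β // P v ∨ v = w} = Nat.card {v : β // P v} + 1 := by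
  cases nonempty_fintype β
  classical
  rw [Nat.card_eq_fintype_card, Nat.card_eq_fintype_card, Fintype.card_subtype,
    Fintype.card_subtype]
  have : (Finset.univ.filter fun v => P v ∨ v = w)
      = insert w (Finset.univ.filter fun v => P v) := by
    ext v
    simp only [Finset.mem_filter, Finset.mem_insert, Finset.mem_univ, true_and]
    tauto
  rw [this, Finset.card_insert_of_notMem (by simp [hw])]

theorem nk_succ (hae : G.edgeOf a ∉ D) :
    Nat.card {x : G.H // ¬ G.edgeOf x ∉ insert (G.edgeOf a) D}
      = Nat.card {x : G.H // ¬ G.edgeOf x ∉ D} + 2 := by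
  have key : ∀ x : G.H, (¬ G.edgeOf x ∉ insert (G.edgeOf a) D)
      ↔ ((¬ G.edgeOf x ∉ D ∨ x = G.edgePair a) ∨ x = a) := by
    intro x
    rw [not_not, not_not, Finset.mem_insert, edgeOf_eq_e_iff]
    tauto
  have h1 : ¬ ((¬ G.edgeOf a ∉ D) ∨ a = G.edgePair a) := by
    rintro (h | h)
    · exact h hae
    · exact G.edgePair_nofix a h.symm
  have h2 : ¬ ¬ G.edgeOf (G.edgePair a) ∉ D := fun h => h (edgeOf_b_kept hae)
  rw [Nat.card_congr (Equiv.subtypeEquivRight key),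
    card_or_eq (fun x => (¬ G.edgeOf x ∉ D) ∨ x = G.edgePair a) a h1,
    card_or_eq (fun x => ¬ G.edgeOf x ∉ D) (G.edgePair a) h2]

theorem ca_iff (hae : G.edgeOf a ∉ D) :
    G.phiFun D (G.edgePair a) = a ↔
      (∀ h, G.rot.SameCycle a h → h ≠ a → G.edgeOf h ∈ D) := by
  rw [phiFun_of_kept (edgeOf_b_kept hae), G.edgePair_invol]
  exact fkG_self_iff hae

theorem cb_iff (hae : G.edgeOf a ∉ D) :
    G.phiFun D a = G.edgePair a ↔
      (∀ h, G.rot.SameCycle (G.edgePair a) h → h ≠ G.edgePair a → G.edgeOf h ∈ D) := by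
  rw [phiFun_of_kept hae]
  exact fkG_self_iff (edgeOf_b_kept hae)

theorem vertexOf_eq_iff {x y : G.H} : G.vertexOf x = G.vertexOf y ↔ G.rot.SameCycle x y :=
  ⟨fun h => Quotient.exact h, fun h => Quotient.sound h⟩

theorem dead_succ (hae : G.edgeOf a ∉ D)
    (hNC : ¬ Relation.EqvGen (G.connStep (insert (G.edgeOf a) D)) a (G.edgePair a)) :
    Nat.card {v : G.VertexSet // ∀ h, G.vertexOf h = v → G.edgeOf h ∈ insert (G.edgeOf a) D}
      + (if G.phiFun D (G.edgePair a) = a then 0 else 1)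
      + (if G.phiFun D a = G.edgePair a then 0 else 1)
      = Nat.card {v : G.VertexSet // ∀ h, G.vertexOf h = v → G.edgeOf h ∈ D} + 2 := by
  set b := G.edgePair a with hb
  have hrotab : ¬ G.rot.SameCycle a b := not_rot_sameCycle hNC
  have hvab : G.vertexOf a ≠ G.vertexOf b := fun h => hrotab (vertexOf_eq_iff.mp h)
  have hdeada : ¬ (∀ h, G.vertexOf h = G.vertexOf a → G.edgeOf h ∈ D) :=
    fun h => hae (h a rfl)
  have hdeadb : ¬ (∀ h, G.vertexOf h = G.vertexOf b → G.edgeOf h ∈ D) :=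
    fun h => (edgeOf_b_kept hae) (h b rfl)
  have key : ∀ v : G.VertexSet,
      (∀ h, G.vertexOf h = v → G.edgeOf h ∈ insert (G.edgeOf a) D)
      ↔ ((∀ h, G.vertexOf h = v → G.edgeOf h ∈ D)
          ∨ (v = G.vertexOf a ∧ G.phiFun D b = a))
          ∨ (v = G.vertexOf b ∧ G.phiFun D a = b) := by
    intro v
    constructor
    · intro hdead
      by_cases hP : ∀ h, G.vertexOf h = v → G.edgeOf h ∈ D
      · exact Or.inl (Or.inl hP)
      · push_neg at hP
        obtain ⟨h₀, hv₀, hk₀⟩ := hP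
        have hE : G.edgeOf h₀ = G.edgeOf a := by
          rcases Finset.mem_insert.mp (hdead h₀ hv₀) with h | h
          · exact h
          · exact absurd h hk₀
        rcases edgeOf_eq_e_iff.mp hE with rfl | rfl
        · left; right
          refine ⟨hv₀.symm, (ca_iff hae).mpr ?_⟩
          intro h hcyc hne
          have hvh : G.vertexOf h = v := by rw [← hv₀]; exact vertexOf_eq_iff.mpr hcyc.symm
          have hnb : h ≠ b := fun hhb => hrotab (hhb ▸ hcyc)
          rcases Finset.mem_insert.mp (hdead h hvh) with he | hD
          · rcases edgeOf_eq_e_iff.mp he with rfl | rfl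
            · exact absurd rfl hne
            · exact absurd rfl hnb
          · exact hD
        · right
          refine ⟨hv₀.symm, (cb_iff hae).mpr ?_⟩
          intro h hcyc hne
          have hvh : G.vertexOf h = v := by rw [← hv₀]; exact vertexOf_eq_iff.mpr hcyc.symm
          have hna : h ≠ a := fun hha => hrotab (hha ▸ hcyc.symm)
          rcases Finset.mem_insert.mp (hdead h hvh) with he | hD
          · rcases edgeOf_eq_e_iff.mp he with rfl | rfl
            · exact absurd rfl hna
            · exact absurd rfl hne
          · exact hD
    · rintro ((hP | ⟨rfl, hca⟩) | ⟨rfl, hcb⟩) <;> intro h hv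
      · exact Finset.mem_insert_of_mem (hP h hv)
      · by_cases hha : h = a
        · rw [hha]; exact Finset.mem_insert_self _ _
        · exact Finset.mem_insert_of_mem
            ((ca_iff hae).mp hca h (vertexOf_eq_iff.mp hv).symm hha)
      · by_cases hhb : h = b
        · rw [hhb, hb, edgeOf_edgePair]; exact Finset.mem_insert_self _ _
        · exact Finset.mem_insert_of_mem
            ((cb_iff hae).mp hcb h (vertexOf_eq_iff.mp hv).symm hhb)
  rw [Nat.card_congr (Equiv.subtypeEquivRight key)]
  set P : G.VertexSet → Prop := fun v => ∀ h, G.vertexOf h = v → G.edgeOf h ∈ D with hP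
  by_cases hca : G.phiFun D b = a <;> by_cases hcb : G.phiFun D a = b
  · rw [if_pos hca, if_pos hcb,
      Nat.card_congr (Equiv.subtypeEquivRight
        (q := fun v => (P v ∨ v = G.vertexOf a) ∨ v = G.vertexOf b) (fun v => by tauto)),
      card_or_eq _ (G.vertexOf b) ?_, card_or_eq _ (G.vertexOf a) hdeada]
    rintro (h | h)
    · exact hdeadb h
    · exact hvab h.symm
  · rw [if_pos hca, if_neg hcb,
      Nat.card_congr (Equiv.subtypeEquivRight
        (q := fun v => P v ∨ v = G.vertexOf a) (fun v => by tauto)),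
      card_or_eq _ (G.vertexOf a) hdeada]
  · rw [if_neg hca, if_pos hcb,
      Nat.card_congr (Equiv.subtypeEquivRight
        (q := fun v => P v ∨ v = G.vertexOf b) (fun v => by tauto)),
      card_or_eq _ (G.vertexOf b) hdeadb]
  · rw [if_neg hca, if_neg hcb,
      Nat.card_congr (Equiv.subtypeEquivRight
        (q := fun v => P v) (fun v => by tauto))]

end RibbonGraph
namespace RibbonGraph

variable {G : RibbonGraph} {D : Finset G.EdgeSet} {a : G.H}

theorem b0_succ (hae : G.edgeOf a ∉ D)
    (hNC : ¬ Relation.EqvGen (G.connStep (insert (G.edgeOf a) D)) a (G.edgePair a)) :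
    G.b0Del D + 1 = G.b0Del (insert (G.edgeOf a) D) := by
  set D' := insert (G.edgeOf a) D with hD'
  set s : Setoid G.H :=
    Setoid.mk _ (Relation.EqvGen.is_equivalence (G.connStep D')) with hs
  have hrel : ∀ x y, Relation.EqvGen (G.connStep D) x y ↔ glueRel s a (G.edgePair a) x y := by
    intro x y
    constructor
    · intro h
      induction h with
      | rel x y hr =>
        rcases hr with hrot | ⟨hk, rfl⟩
        · exact Or.inl (Relation.EqvGen.rel _ _ (Or.inl hrot))
        · by_cases hE : G.edgeOf x = G.edgeOf a
          · rcases edgeOf_eq_e_iff.mp hE with rfl | rfl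
            · exact Or.inr (Or.inl ⟨Relation.EqvGen.refl _, Relation.EqvGen.refl _⟩)
            · exact Or.inr (Or.inr ⟨Relation.EqvGen.refl _,
                by rw [G.edgePair_invol]; try exact Relation.EqvGen.refl _⟩)
          · refine Or.inl (Relation.EqvGen.rel _ _ (Or.inr ⟨?_, rfl⟩))
            rw [hD', Finset.mem_insert]
            rintro (h | h)
            · exact hE h
            · exact hk h
      | refl x => exact (glueRel_equiv s a (G.edgePair a)).refl x
      | symm x y _ ih => exact (glueRel_equiv s a (G.edgePair a)).symm ih
      | trans x y z _ _ ih ih' => exact (glueRel_equiv s a (G.edgePair a)).trans ih ih'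
    · have hsub : ∀ x y, s.r x y → Relation.EqvGen (G.connStep D) x y :=
        fun x y h => conn_mono (Finset.subset_insert _ _) h
      have hpair : Relation.EqvGen (G.connStep D) a (G.edgePair a) :=
        Relation.EqvGen.rel _ _ (Or.inr ⟨hae, rfl⟩)
      rintro (h | ⟨h1, h2⟩ | ⟨h1, h2⟩)
      · exact hsub _ _ h
      · exact ((hsub _ _ h1).trans _ _ _ hpair).trans _ _ _ (hsub _ _ h2)
      · exact ((hsub _ _ h1).trans _ _ _ (hpair.symm _ _)).trans _ _ _ (hsub _ _ h2)
  have hset : (Setoid.mk _ (Relation.EqvGen.is_equivalence (G.connStep D)))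
      = glueSetoid s a (G.edgePair a) := Setoid.ext hrel
  show Nat.card (Quotient _) + 1 = Nat.card (Quotient s)
  rw [hset]
  exact card_quotient_glue s a (G.edgePair a) hNC

theorem card_psi (hae : G.edgeOf a ∉ D)
    (hNC : ¬ Relation.EqvGen (G.connStep (insert (G.edgeOf a) D)) a (G.edgePair a)) :
    Nat.card (Quotient (cycSetoid (G.phiPerm D))) + 1
      = Nat.card (Quotient (cycSetoid (G.phiPerm D * Equiv.swap a (G.edgePair a)))) := by
  set b := G.edgePair a with hb
  set φ := G.phiPerm D with hφ
  set ψ := G.phiPerm D * Equiv.swap a b with hψ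
  have hψa : ψ a = G.phiFun D b := by
    simp [hψ, Equiv.Perm.mul_apply, Equiv.swap_apply_left]
  have hψb : ψ b = G.phiFun D a := by
    simp [hψ, Equiv.Perm.mul_apply, Equiv.swap_apply_right]
  have hψ_ne : ∀ z, z ≠ a → z ≠ b → ψ z = G.phiFun D z := by
    intro z h1 h2
    simp [hψ, Equiv.Perm.mul_apply, Equiv.swap_apply_of_ne_of_ne h1 h2]
  have hcyc : φ.SameCycle a b := bridge_sameCycle hae hNC
  have hsub : ∀ x y : G.H, ψ.SameCycle x y → φ.SameCycle x y := by
    intro x y h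
    refine sameCycle_elim (r := φ.SameCycle) (fun z => Equiv.Perm.SameCycle.refl _ _)
      (fun x y z h h' => h.trans h') ?_ h
    intro z
    by_cases h1 : z = a
    · rw [h1, hψa]
      exact hcyc.trans ⟨1, by simp [hφ, hψ]⟩
    by_cases h2 : z = b
    · rw [h2, hψb]
      exact hcyc.symm.trans ⟨1, by simp [hφ, hψ]⟩
    · rw [hψ_ne z h1 h2]
      exact ⟨1, by simp [hφ, hψ]⟩
  have hrel : ∀ x y, φ.SameCycle x y ↔ glueRel (cycSetoid ψ) a b x y := by
    intro x y
    constructor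
    · intro h
      refine sameCycle_elim (r := glueRel (cycSetoid ψ) a b)
        (glueRel_equiv _ a b).refl (fun _ _ _ h h' => (glueRel_equiv _ a b).trans h h') ?_ h
      intro z
      by_cases h1 : z = a
      · refine Or.inr (Or.inl ⟨h1 ▸ Equiv.Perm.SameCycle.refl _ _, ?_⟩)
        rw [h1, show φ a = ψ b from hψb.symm]
        exact ⟨1, by simp [hφ, hψ]⟩
      by_cases h2 : z = b
      · refine Or.inr (Or.inr ⟨h2 ▸ Equiv.Perm.SameCycle.refl _ _, ?_⟩)
        rw [h2, show φ b = ψ a from hψa.symm]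
        exact ⟨1, by simp [hφ, hψ]⟩
      · refine Or.inl (show ψ.SameCycle z (φ z) from ⟨1, ?_⟩)
        rw [zpow_one, hψ_ne z h1 h2, hφ, phiPerm_apply]
    · rintro (h | ⟨h1, h2⟩ | ⟨h1, h2⟩)
      · exact hsub _ _ h
      · exact ((hsub _ _ h1).trans hcyc).trans (hsub _ _ h2)
      · exact ((hsub _ _ h1).trans hcyc.symm).trans (hsub _ _ h2)
  have hset : cycSetoid φ = glueSetoid (cycSetoid ψ) a b := Setoid.ext hrel
  rw [hset]
  exact card_quotient_glue (cycSetoid ψ) a b (bridge_not_sameCycle_psi hae hNC)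

end RibbonGraph
namespace RibbonGraph

variable {G : RibbonGraph} {D : Finset G.EdgeSet} {a : G.H}

theorem card_detach (hae : G.edgeOf a ∉ D)
    (hNC : ¬ Relation.EqvGen (G.connStep (insert (G.edgeOf a) D)) a (G.edgePair a)) :
    Nat.card (Quotient (cycSetoid (G.phiPerm D * Equiv.swap a (G.edgePair a))))
      + (if G.phiFun D (G.edgePair a) = a then 0 else 1)
      + (if G.phiFun D a = G.edgePair a then 0 else 1)
      = Nat.card (Quotient (cycSetoid (G.phiPerm (insert (G.edgeOf a) D)))) := by
  set b := G.edgePair a with hb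
  set D' := insert (G.edgeOf a) D with hD'
  set φ' := G.phiPerm D' with hφ'
  set ψ := G.phiPerm D * Equiv.swap a b with hψ
  set c1 := G.phiFun D b with hc1
  set c2 := G.phiFun D a with hc2
  set s0 := cycSetoid φ' with hs0
  set t1 := glueSetoid s0 a c1 with ht1
  have hψa : ψ a = c1 := by
    simp [hψ, Equiv.Perm.mul_apply, Equiv.swap_apply_left, hc1]
  have hψb : ψ b = c2 := by
    simp [hψ, Equiv.Perm.mul_apply, Equiv.swap_apply_right, hc2]
  have hψ_ne : ∀ z, z ≠ a → z ≠ b → ψ z = G.phiFun D z := by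
    intro z h1 h2
    simp [hψ, Equiv.Perm.mul_apply, Equiv.swap_apply_of_ne_of_ne h1 h2]
  have hfixa : φ' a = a := phiD'_fix_a
  have hfixb : φ' b = b := phiD'_fix_b
  have hs0afix : ∀ y, s0.r a y → y = a := fun y h => sameCycle_fixed hfixa h
  have hs0bfix : ∀ y, s0.r b y → y = b := fun y h => sameCycle_fixed hfixb h
  have hc1b : c1 ≠ b := by
    intro h
    obtain ⟨m, hm0, heq, hk, hd⟩ := fkG_spec hae
    have : c1 = (G.rot ^ m) a := by
      rw [hc1, phiFun_of_kept (edgeOf_b_kept hae), G.edgePair_invol, heq]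
    exact not_rot_sameCycle hNC ⟨(m : ℤ), by rw [zpow_natCast, ← this, h]⟩
  have hc2a : c2 ≠ a := by
    intro h
    obtain ⟨m, hm0, heq, hk, hd⟩ := fkG_spec (edgeOf_b_kept hae)
    have : c2 = (G.rot ^ m) b := by
      rw [hc2, phiFun_of_kept hae, heq]
    exact not_rot_sameCycle hNC
      (Equiv.Perm.SameCycle.symm ⟨(m : ℤ), by rw [zpow_natCast, ← this, h]⟩)
  have hab : a ≠ b := (G.edgePair_nofix a).symm
  -- s0 relations embed into ψ-cycles
  have hsub0 : ∀ x y : G.H, s0.r x y → ψ.SameCycle x y := by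
    intro x y h
    refine sameCycle_elim (r := ψ.SameCycle) (fun z => Equiv.Perm.SameCycle.refl _ _)
      (fun x y z h h' => h.trans h') ?_ h
    intro z
    show ψ.SameCycle z (G.phiFun D' z)
    by_cases hz : G.edgeOf z ∈ D'
    · rw [phiFun_of_del hz]
    by_cases hza : z = a
    · rw [hza] at hz; exact absurd (Finset.mem_insert_self _ _) hz
    by_cases hzb : z = b
    · rw [hzb] at hz
      exact absurd (by rw [hb, edgeOf_edgePair]; exact Finset.mem_insert_self _ _) hz
    rcases phiD'_cases hae hNC hz with ⟨h1, h2, heq⟩ | ⟨hza', heq, _, _⟩ | ⟨hzb', heq, _, _⟩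
    · rw [heq, ← hψ_ne z hza hzb]
      exact ⟨1, by simp⟩
    · rw [heq, ← hb, ← hc1, ← hψa, ← hza', ← hψ_ne z hza hzb]
      exact ⟨2, by rw [show (2:ℤ) = 1 + 1 by norm_num, zpow_add, zpow_one,
        Equiv.Perm.mul_apply]⟩
    · rw [heq, ← hc2, ← hψb, show b = G.phiFun D z from hb.trans hzb'.symm,
        ← hψ_ne z hza hzb]
      exact ⟨2, by rw [show (2:ℤ) = 1 + 1 by norm_num, zpow_add, zpow_one,
        Equiv.Perm.mul_apply]⟩
  have hsub1 : ∀ x y : G.H, t1.r x y → ψ.SameCycle x y := by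
    have hpair : ψ.SameCycle a c1 := ⟨1, by rw [zpow_one, hψa]⟩
    rintro x y (h | ⟨h1, h2⟩ | ⟨h1, h2⟩)
    · exact hsub0 _ _ h
    · exact ((hsub0 _ _ h1).trans hpair).trans (hsub0 _ _ h2)
    · exact ((hsub0 _ _ h1).trans hpair.symm).trans (hsub0 _ _ h2)
  -- ψ-cycles are exactly the double-glued φ'-cycles
  have hrel : ∀ x y, ψ.SameCycle x y ↔ glueRel t1 b c2 x y := by
    intro x y
    constructor
    · intro h
      refine sameCycle_elim (r := glueRel t1 b c2)
        (glueRel_equiv _ b c2).refl (fun _ _ _ h h' => (glueRel_equiv _ b c2).trans h h') ?_ h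
      intro z
      by_cases hza : z = a
      · rw [hza, hψa]
        exact Or.inl (Or.inr (Or.inl ⟨Equiv.Perm.SameCycle.refl _ _,
          Equiv.Perm.SameCycle.refl _ _⟩))
      by_cases hzb : z = b
      · rw [hzb, hψb]
        exact Or.inr (Or.inl ⟨(glueRel_equiv s0 a c1).refl b, (glueRel_equiv s0 a c1).refl c2⟩)
      rw [hψ_ne z hza hzb]
      by_cases hz : G.edgeOf z ∈ D
      · rw [phiFun_of_del hz]
        exact (glueRel_equiv _ b c2).refl z
      have hzD' : G.edgeOf z ∉ D' := keptD'_iff.mpr ⟨hz, hza, hzb⟩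
      rcases phiD'_cases hae hNC hzD' with ⟨h1, h2, heq⟩ | ⟨hza', heq, _, _⟩ | ⟨hzb', heq, _, _⟩
      · exact Or.inl (Or.inl (show φ'.SameCycle z (G.phiFun D z) from
          ⟨1, by rw [zpow_one, hφ', phiPerm_apply, heq]⟩))
      · rw [hza']
        refine Or.inl (Or.inr (Or.inr ⟨?_, Equiv.Perm.SameCycle.refl _ _⟩))
        exact show φ'.SameCycle z c1 from
          ⟨1, by rw [zpow_one, hφ', phiPerm_apply, heq, ← hb, ← hc1]⟩
      · rw [hzb']
        refine Or.inr (Or.inr ⟨Or.inl ?_, (glueRel_equiv s0 a c1).refl b⟩)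
        exact show φ'.SameCycle z c2 from
          ⟨1, by rw [zpow_one, hφ', phiPerm_apply, heq, ← hc2]⟩
    · have hpair2 : ψ.SameCycle b c2 := ⟨1, by rw [zpow_one, hψb]⟩
      rintro (h | ⟨h1, h2⟩ | ⟨h1, h2⟩)
      · exact hsub1 _ _ h
      · exact ((hsub1 _ _ h1).trans hpair2).trans (hsub1 _ _ h2)
      · exact ((hsub1 _ _ h1).trans hpair2.symm).trans (hsub1 _ _ h2)
  have hset : cycSetoid ψ = glueSetoid t1 b c2 := Setoid.ext hrel
  have e2card : Nat.card (Quotient (cycSetoid ψ)) + (if G.phiFun D a = b then 0 else 1)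
      = Nat.card (Quotient t1) := by
    by_cases hcb : G.phiFun D a = b
    · rw [if_pos hcb, hset, glueSetoid_self t1 b c2 (Or.inl (show s0.r b c2 by
        rw [hc2, hcb]; try exact Equiv.Perm.SameCycle.refl _ _))]
      omega
    · rw [if_neg hcb, hset]
      refine card_quotient_glue t1 b c2 ?_
      rintro (h | ⟨h1, h2⟩ | ⟨h1, h2⟩)
      · exact hcb (by rw [← hc2]; exact hs0bfix c2 h)
      · exact hab (hs0bfix a h1)
      · exact hc1b ((hs0bfix c1 h1))
  have e1card : Nat.card (Quotient t1) + (if G.phiFun D b = a then 0 else 1)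
      = Nat.card (Quotient s0) := by
    by_cases hca : G.phiFun D b = a
    · rw [if_pos hca, ht1, glueSetoid_self s0 a c1 (show s0.r a c1 by
        rw [hc1, hca]; try exact Equiv.Perm.SameCycle.refl _ _)]
      omega
    · rw [if_neg hca, ht1]
      exact card_quotient_glue s0 a c1 (fun h => hca (by rw [← hc1]; exact hs0afix c1 h))
  rw [← hc1] at e1card
  rw [← hc2] at e2card
  omega

theorem faces_succ (hae : G.edgeOf a ∉ D)
    (hNC : ¬ Relation.EqvGen (G.connStep (insert (G.edgeOf a) D)) a (G.edgePair a)) :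
    G.facesDel (insert (G.edgeOf a) D) = G.facesDel D + 1 := by
  have h1 := cardQ_phi G D
  have h2 := cardQ_phi G (insert (G.edgeOf a) D)
  have h3 := card_psi hae hNC
  have h4 := card_detach hae hNC
  have h5 := nk_succ hae
  have h6 := dead_succ hae hNC
  unfold facesDel
  omega

end RibbonGraph
namespace RibbonGraph

variable {G : RibbonGraph} {D : Finset G.EdgeSet} {a : G.H}

theorem b1_eq (hae : G.edgeOf a ∉ D)
    (hNC : ¬ Relation.EqvGen (G.connStep (insert (G.edgeOf a) D)) a (G.edgePair a)) :
    G.b1Del (insert (G.edgeOf a) D) = G.b1Del D := by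
  have hb0 := b0_succ hae hNC
  have hcard : (insert (G.edgeOf a) D).card = D.card + 1 := Finset.card_insert_of_notMem hae
  have hle : D.card + 1 ≤ G.numEdges := by
    rw [← hcard, numEdges, Nat.card_eq_fintype_card]
    exact Finset.card_le_univ (insert (G.edgeOf a) D)
  unfold b1Del numEdgesDel
  rw [hcard, ← hb0]
  have h2 : G.numEdges - (D.card + 1) + 1 = G.numEdges - D.card := by omega
  push_cast [← h2]
  ring

theorem genus_eq (hae : G.edgeOf a ∉ D)
    (hNC : ¬ Relation.EqvGen (G.connStep (insert (G.edgeOf a) D)) a (G.edgePair a)) :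
    G.genusDel (insert (G.edgeOf a) D) = G.genusDel D := by
  unfold genusDel
  rw [b1_eq hae hNC, faces_succ hae hNC, ← b0_succ hae hNC]
  congr 1
  push_cast
  ring

theorem exp_eq (hae : G.edgeOf a ∉ D)
    (hNC : ¬ Relation.EqvGen (G.connStep (insert (G.edgeOf a) D)) a (G.edgePair a)) :
    (G.b1Del (insert (G.edgeOf a) D) - G.genusDel (insert (G.edgeOf a) D)).toNat
      = (G.b1Del D - G.genusDel D).toNat := by
  rw [b1_eq hae hNC, genus_eq hae hNC]

end RibbonGraph

/-- If a virtual graph `G` has a bridge edge, then its `S`-polynomial is identically zero. -/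
theorem stmt3 (G : RibbonGraph) (e : G.EdgeSet) (he : G.IsBridge e) :
    G.SPoly = 0 := by
  obtain ⟨a, hA⟩ : ∃ h, G.edgeOf h = e := Quotient.exists_rep e
  subst hA
  set e := G.edgeOf a with he'
  -- the two halves of a bridge are not connected after deleting it
  have hNC0 : ¬ Relation.EqvGen (G.connStep {e}) a (G.edgePair a) := by
    intro hcon
    have hiff : ∀ x y, Relation.EqvGen (G.connStep (∅ : Finset G.EdgeSet)) x y ↔
        Relation.EqvGen (G.connStep {e}) x y := by
      intro x y
      constructor
      · intro h
        induction h with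
        | rel x y hr =>
          rcases hr with hrot | ⟨-, rfl⟩
          · exact Relation.EqvGen.rel _ _ (Or.inl hrot)
          · by_cases hE : G.edgeOf x = e
            · rcases RibbonGraph.edgeOf_eq_iff.mp hE with rfl | rfl
              · exact hcon
              · rw [G.edgePair_invol]
                exact hcon.symm _ _
            · exact Relation.EqvGen.rel _ _ (Or.inr ⟨by simpa using hE, rfl⟩)
        | refl x => exact Relation.EqvGen.refl x
        | symm x y _ ih => exact ih.symm _ _
        | trans x y z _ _ ih ih' => exact ih.trans _ _ _ ih'
      · exact fun h => RibbonGraph.conn_mono (Finset.empty_subset _) h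
    have hset : (Setoid.mk _ (Relation.EqvGen.is_equivalence
          (G.connStep (∅ : Finset G.EdgeSet))))
        = Setoid.mk _ (Relation.EqvGen.is_equivalence (G.connStep {e})) :=
      Setoid.ext hiff
    have : G.b0Del ∅ = G.b0Del {e} := by
      unfold RibbonGraph.b0Del
      rw [hset]
    exact absurd he (by rw [RibbonGraph.IsBridge, this]; exact lt_irrefl _)
  have hNC : ∀ D : Finset G.EdgeSet,
      ¬ Relation.EqvGen (G.connStep (insert e D)) a (G.edgePair a) :=
    fun D h => hNC0 (RibbonGraph.conn_mono (Finset.singleton_subset_iff.mpr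
      (Finset.mem_insert_self _ _)) h)
  unfold RibbonGraph.SPoly
  refine Finset.sum_ninvolution (fun D => if e ∈ D then D.erase e else insert e D)
    ?_ ?_ (fun _ => Finset.mem_univ _) ?_
  · intro Dset
    by_cases hmem : e ∈ Dset
    · rw [if_pos hmem]
      have h1 : insert e (Dset.erase e) = Dset := Finset.insert_erase hmem
      have h2 : e ∉ Dset.erase e := Finset.notMem_erase _ _
      have hexp := RibbonGraph.exp_eq (D := Dset.erase e) (a := a) h2 (h1 ▸ hNC _)
      rw [← he', h1] at hexp
      have hpos : 1 ≤ Dset.card := Finset.card_pos.mpr ⟨e, hmem⟩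
      have hce := Finset.card_erase_of_mem hmem
      have hcard : Dset.card = (Dset.erase e).card + 1 := by omega
      rw [hexp, hcard, pow_succ]
      ring
    · rw [if_neg hmem]
      have hexp := RibbonGraph.exp_eq (D := Dset) (a := a) hmem (hNC _)
      rw [← he'] at hexp
      rw [hexp, Finset.card_insert_of_notMem hmem, pow_succ]
      ring
  · intro Dset _
    by_cases hmem : e ∈ Dset
    · rw [if_pos hmem]
      intro h
      exact Finset.notMem_erase e Dset (by rw [h]; exact hmem)
    · rw [if_neg hmem]
      intro h
      exact hmem (by rw [← h]; exact Finset.mem_insert_self e Dset)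
  · intro Dset
    by_cases hmem : e ∈ Dset
    · rw [if_pos hmem, if_neg (Finset.notMem_erase e Dset), Finset.insert_erase hmem]
    · rw [if_neg hmem, if_pos (Finset.mem_insert_self e Dset), Finset.erase_insert hmem]
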